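/- (Proposition 1) Let f be a ReLU network as defined and let the input x be a Gaussian-mixture random vector with law μ = Σ_{k=1}^K α_k N(μ_k, Σ_k). Fix a binary vector ζ' ∈ {0,1}^N and set μ̃_{k,ζ'} = C̄^{(L-1)} μ_k + d̄^{(L-1)} and Σ̃_{k,ζ'} = C̄^{(L-1)} Σ_k (C̄^{(L-1)})ᵀ. If Σ̃_{k,ζ'} is invertible for all k, then the probability that the activation pattern equals ζ' is the mixture of Gaussian orthant probabilities: P(ζ(x) = ζ') = Σ_{k=1}^K α_k · N(μ̃_{k,ζ'}, Σ̃_{k,ζ'})(O(ζ')). -/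

import Mathlib

open Matrix MeasureTheory ProbabilityTheory

namespace ReluPaper

variable {n : ℕ → ℕ}

/-- Hidden representations of the ReLU network: `hid W b x ℓ` is the paper's
`h_{ℓ+1}(x)`, so that for a network with `L = M + 1` layers the output is
`f(x) = h_L(x) = hid W b x M`. -/
noncomputable def hid (W : ∀ ℓ : ℕ, Matrix (Fin (n (ℓ + 1))) (Fin (n ℓ)) ℝ)
    (b : ∀ ℓ : ℕ, Fin (n (ℓ + 1)) → ℝ) (x : Fin (n 0) → ℝ) :
    ∀ ℓ : ℕ, Fin (n (ℓ + 1)) → ℝ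
  | 0 => W 0 *ᵥ x + b 0
  | ℓ + 1 => W (ℓ + 1) *ᵥ (fun i => max 0 (hid W b x ℓ i)) + b (ℓ + 1)

/-- The matrices `C_ℓ` of the paper (0-indexed: `Cmat W z ℓ` is the paper's `C_{ℓ+1}`),
built from an activation pattern `z` via `C₁ = W₁`, `C_ℓ = W_ℓ diag(z_{ℓ-1}) C_{ℓ-1}`. -/
noncomputable def Cmat (W : ∀ ℓ : ℕ, Matrix (Fin (n (ℓ + 1))) (Fin (n ℓ)) ℝ)
    (z : ∀ ℓ : ℕ, Fin (n (ℓ + 1)) → ℝ) :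
    ∀ ℓ : ℕ, Matrix (Fin (n (ℓ + 1))) (Fin (n 0)) ℝ
  | 0 => W 0
  | ℓ + 1 => W (ℓ + 1) * Matrix.diagonal (z ℓ) * Cmat W z ℓ

/-- The vectors `d_ℓ` of the paper (0-indexed: `dvec W b z ℓ` is the paper's `d_{ℓ+1}`),
via `d₁ = b₁`, `d_ℓ = W_ℓ diag(z_{ℓ-1}) d_{ℓ-1} + b_ℓ`. -/
noncomputable def dvec (W : ∀ ℓ : ℕ, Matrix (Fin (n (ℓ + 1))) (Fin (n ℓ)) ℝ)
    (b : ∀ ℓ : ℕ, Fin (n (ℓ + 1)) → ℝ) (z : ∀ ℓ : ℕ, Fin (n (ℓ + 1)) → ℝ) :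
    ∀ ℓ : ℕ, Fin (n (ℓ + 1)) → ℝ
  | 0 => b 0
  | ℓ + 1 => W (ℓ + 1) *ᵥ (Matrix.diagonal (z ℓ) *ᵥ dvec W b z ℓ) + b (ℓ + 1)

/-- `x` induces activation pattern `z`, i.e. `𝟙(h_ℓ) = z_ℓ` for every hidden layer
`ℓ = 1, …, L - 1` of a network with `L = M + 1` layers. -/
def inducesPattern (M : ℕ) (W : ∀ ℓ : ℕ, Matrix (Fin (n (ℓ + 1))) (Fin (n ℓ)) ℝ)
    (b : ∀ ℓ : ℕ, Fin (n (ℓ + 1)) → ℝ) (x : Fin (n 0) → ℝ)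
    (z : ∀ ℓ : ℕ, Fin (n (ℓ + 1)) → ℝ) : Prop :=
  ∀ ℓ < M, ∀ i, (if 0 < hid W b x ℓ i then (1 : ℝ) else 0) = z ℓ i

/-- Index set for the stacked vector `[h₁ᵀ, …, h_{L-1}ᵀ]ᵀ` (with `L = M + 1`):
a hidden layer index together with a neuron index in that layer. -/
abbrev PatIdx (M : ℕ) (n : ℕ → ℕ) := (ℓ : Fin M) × Fin (n (ℓ.1 + 1))

/-- The multivariate (possibly degenerate) Gaussian distribution `N(m, S)` on `ι → ℝ`:
the pushforward of a standard Gaussian under the affine map `x ↦ m + √S x`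
(with junk value `0` if `S` is not positive semidefinite, a case never used below). -/
noncomputable def mvGaussian {ι : Type*} [Fintype ι] [DecidableEq ι]
    (m : ι → ℝ) (S : Matrix ι ι ℝ) : Measure (ι → ℝ) :=
  letI := Classical.propDecidable S.PosSemidef
  if hS : S.PosSemidef then
    Measure.map (fun x => m + ((hS.1.eigenvectorUnitary : Matrix ι ι ℝ) *
        Matrix.diagonal ((↑) ∘ (√·) ∘ hS.1.eigenvalues) *
        (star hS.1.eigenvectorUnitary : Matrix ι ι ℝ)) *ᵥ x) (Measure.pi fun _ : ι => gaussianReal 0 1)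
  else 0

/-- The square root used in `mvGaussian`. -/
noncomputable def psq {ι : Type*} [Fintype ι] [DecidableEq ι] {S : Matrix ι ι ℝ}
    (hS : S.PosSemidef) : Matrix ι ι ℝ :=
  (hS.1.eigenvectorUnitary : Matrix ι ι ℝ) *
        Matrix.diagonal ((↑) ∘ (√·) ∘ hS.1.eigenvalues) *
        (star hS.1.eigenvectorUnitary : Matrix ι ι ℝ)

lemma psq_mul_self {ι : Type*} [Fintype ι] [DecidableEq ι] {S : Matrix ι ι ℝ}
    (hS : S.PosSemidef) : psq hS * psq hS = S := by
  have hU : (star hS.1.eigenvectorUnitary : Matrix ι ι ℝ) * (hS.1.eigenvectorUnitary : Matrix ι ι ℝ) = 1 :=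
    Unitary.coe_star_mul_self _
  have hD : Matrix.diagonal ((↑) ∘ (√·) ∘ hS.1.eigenvalues : ι → ℝ) *
      Matrix.diagonal ((↑) ∘ (√·) ∘ hS.1.eigenvalues) =
      Matrix.diagonal (RCLike.ofReal ∘ hS.1.eigenvalues) := by
    rw [Matrix.diagonal_mul_diagonal]
    congr 1
    funext i
    simp [Real.mul_self_sqrt (hS.eigenvalues_nonneg i)]
  conv_rhs => rw [hS.1.spectral_theorem, Unitary.conjStarAlgAut_apply]
  rw [psq, ← hD]
  simp only [Matrix.mul_assoc]
  rw [← Matrix.mul_assoc (star _ : Matrix ι ι ℝ) (hS.1.eigenvectorUnitary : Matrix ι ι ℝ), hU,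
    Matrix.one_mul]

lemma psq_transpose {ι : Type*} [Fintype ι] [DecidableEq ι] {S : Matrix ι ι ℝ}
    (hS : S.PosSemidef) : (psq hS)ᵀ = psq hS := by
  rw [← Matrix.conjTranspose_eq_transpose_of_trivial, psq, Matrix.conjTranspose_mul,
    Matrix.conjTranspose_mul, Matrix.diagonal_conjTranspose, ← Matrix.star_eq_conjTranspose,
    ← Matrix.star_eq_conjTranspose, star_star, Matrix.mul_assoc]
  congr 2


/-! ### Auxiliary lemmas -/

section AuxMeasure
set_option linter.unusedSectionVars false

/-- The standard Gaussian measure on `ι → ℝ`. -/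
noncomputable def stdG (ι : Type*) [Fintype ι] : Measure (ι → ℝ) :=
  Measure.pi fun _ : ι => gaussianReal 0 1

instance (ι : Type*) [Fintype ι] : IsProbabilityMeasure (stdG ι) := by
  unfold stdG; infer_instance

variable {ι : Type*} [Fintype ι] [DecidableEq ι]

lemma stdG_eq : stdG ι = (volume : Measure (ι → ℝ)).withDensity
    (fun x => ENNReal.ofReal (∏ i, gaussianPDFReal 0 1 (x i))) := by
  show Measure.pi _ = _
  refine Measure.pi_eq fun s hs => ?_
  have hbox : MeasurableSet (Set.pi Set.univ s) := MeasurableSet.univ_pi hs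
  rw [withDensity_apply _ hbox]
  have hind : ∀ x : ι → ℝ,
      (Set.pi Set.univ s).indicator (fun x => ENNReal.ofReal (∏ i, gaussianPDFReal 0 1 (x i))) x
        = ENNReal.ofReal (∏ i, (s i).indicator (gaussianPDFReal 0 1) (x i)) := by
    intro x
    by_cases hx : x ∈ Set.pi Set.univ s
    · rw [Set.indicator_of_mem hx]
      congr 1
      exact Finset.prod_congr rfl fun i _ =>
        (Set.indicator_of_mem (hx i (Set.mem_univ i)) _).symm
    · rw [Set.indicator_of_notMem hx]
      rw [Set.mem_univ_pi] at hx
      push_neg at hx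
      obtain ⟨i, hi⟩ := hx
      rw [Finset.prod_eq_zero (Finset.mem_univ i) (Set.indicator_of_notMem hi _),
        ENNReal.ofReal_zero]
  rw [← lintegral_indicator hbox (fun x => ENNReal.ofReal (∏ i, gaussianPDFReal 0 1 (x i)))]
  simp_rw [hind]
  rw [← ofReal_integral_eq_lintegral_ofReal]
  · rw [volume_pi, integral_fintype_prod_eq_prod
      (f := fun i (t : ℝ) => (s i).indicator (gaussianPDFReal 0 1) t)]
    rw [ENNReal.ofReal_prod_of_nonneg (fun i _ => integral_nonneg
      (fun t => Set.indicator_nonneg (fun t _ => gaussianPDFReal_nonneg 0 1 t) t))]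
    refine Finset.prod_congr rfl fun i _ => ?_
    rw [integral_indicator (hs i), ← gaussianReal_apply_eq_integral 0 one_ne_zero]
  · exact Integrable.fintype_prod fun i => (integrable_gaussianPDFReal 0 1).indicator (hs i)
  · exact ae_of_all _ fun x => Finset.prod_nonneg fun i _ =>
      Set.indicator_nonneg (fun t _ => gaussianPDFReal_nonneg 0 1 t) _

lemma measurable_mulVec {κ : Type*} (M : Matrix κ ι ℝ) :
    Measurable fun x : ι → ℝ => M *ᵥ x := by
  refine measurable_pi_lambda _ fun i => ?_
  simpa [Matrix.mulVec, dotProduct] using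
    Finset.measurable_sum Finset.univ fun j _ => (measurable_pi_apply j).const_mul _

lemma measurable_gdens : Measurable fun x : ι → ℝ =>
    ENNReal.ofReal (∏ i, gaussianPDFReal 0 1 (x i)) :=
  ENNReal.measurable_ofReal.comp <| Finset.measurable_prod _ fun i _ =>
    (measurable_gaussianPDFReal 0 1).comp (measurable_pi_apply i)

lemma sum_sq_mulVec (M : Matrix ι ι ℝ) (hM : M * Mᵀ = 1) (x : ι → ℝ) :
    ∑ i, ((M *ᵥ x) i) ^ 2 = ∑ i, (x i) ^ 2 := by
  have h1 : Mᵀ * M = 1 := mul_eq_one_comm.mp hM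
  have h : (M *ᵥ x) ⬝ᵥ (M *ᵥ x) = x ⬝ᵥ x := by
    rw [dotProduct_mulVec, ← Matrix.mulVec_transpose, Matrix.mulVec_mulVec, h1,
      Matrix.one_mulVec]
  simpa [dotProduct, sq] using h

lemma prod_pdf (y : ι → ℝ) : ∏ i, gaussianPDFReal 0 1 (y i) =
    (Real.sqrt (2 * Real.pi))⁻¹ ^ (Fintype.card ι) * Real.exp (∑ i, -((y i) ^ 2 / 2)) := by
  simp only [gaussianPDFReal, NNReal.coe_one, mul_one, sub_zero,
    Finset.prod_mul_distrib, Finset.prod_const, Finset.card_univ, Real.exp_sum]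
  ring_nf

lemma gdens_invariant (M : Matrix ι ι ℝ) (hM : M * Mᵀ = 1) (x : ι → ℝ) :
    (∏ i, gaussianPDFReal 0 1 ((M *ᵥ x) i)) = ∏ i, gaussianPDFReal 0 1 (x i) := by
  rw [prod_pdf, prod_pdf]
  congr 2
  rw [Finset.sum_neg_distrib, Finset.sum_neg_distrib, ← Finset.sum_div, ← Finset.sum_div,
    sum_sq_mulVec M hM]

lemma stdG_rot (M : Matrix ι ι ℝ) (hM : M * Mᵀ = 1) :
    Measure.map (fun x => M *ᵥ x) (stdG ι) = stdG ι := by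
  have hdet2 : M.det * M.det = 1 := by
    have h := congrArg Matrix.det hM
    rwa [Matrix.det_mul, Matrix.det_transpose, Matrix.det_one] at h
  have hdet : M.det ≠ 0 := by
    intro h; rw [h, mul_zero] at hdet2; exact zero_ne_one hdet2
  have habs : |M.det⁻¹| = 1 := by
    have h1 : |M.det| * |M.det| = 1 := by
      rw [abs_mul_abs_self]; exact hdet2
    have h2 : |M.det| = 1 := by nlinarith [abs_nonneg M.det]
    rw [abs_inv, h2, inv_one]
  have hcoe : ⇑(Matrix.toLin' M) = fun x : ι → ℝ => M *ᵥ x :=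
    funext fun x => Matrix.toLin'_apply M x
  have hvol : Measure.map (fun x : ι → ℝ => M *ᵥ x) (volume : Measure (ι → ℝ)) = volume := by
    have h := Real.map_matrix_volume_pi_eq_smul_volume_pi hdet
    rw [hcoe, habs, ENNReal.ofReal_one, one_smul] at h
    exact h
  have hmeas : Measurable fun x : ι → ℝ => M *ᵥ x := measurable_mulVec M
  ext A hA
  rw [Measure.map_apply hmeas hA, stdG_eq, withDensity_apply _ (hmeas hA),
    withDensity_apply _ hA]
  calc ∫⁻ x in (fun x => M *ᵥ x) ⁻¹' A, ENNReal.ofReal (∏ i, gaussianPDFReal 0 1 (x i)) ∂volume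
      = ∫⁻ x in (fun x => M *ᵥ x) ⁻¹' A,
          ENNReal.ofReal (∏ i, gaussianPDFReal 0 1 ((M *ᵥ x) i)) ∂volume := by
        refine setLIntegral_congr_fun ((hmeas hA)) (fun x _ => ?_)
        rw [gdens_invariant M hM]
    _ = ∫⁻ y in A, ENNReal.ofReal (∏ i, gaussianPDFReal 0 1 (y i))
          ∂(Measure.map (fun x => M *ᵥ x) volume) := by
        rw [setLIntegral_map hA measurable_gdens hmeas]
    _ = ∫⁻ y in A, ENNReal.ofReal (∏ i, gaussianPDFReal 0 1 (y i)) ∂volume := by rw [hvol]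

lemma stdG_proj {κ κ' : Type*} [Fintype κ] [Fintype κ'] :
    Measure.map (fun w : (κ ⊕ κ') → ℝ => fun p => w (Sum.inl p)) (stdG (κ ⊕ κ')) = stdG κ := by
  have h := measurePreserving_sumPiEquivProdPi
    (X := fun _ : κ ⊕ κ' => ℝ) (μ := fun _ => gaussianReal 0 1)
  have hco : (fun w : (κ ⊕ κ') → ℝ => fun p => w (Sum.inl p)) =
      Prod.fst ∘ (MeasurableEquiv.sumPiEquivProdPi (fun _ : κ ⊕ κ' => ℝ)) := rfl
  rw [stdG, hco, ← Measure.map_map measurable_fst (MeasurableEquiv.measurable _),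
    h.map_eq, Measure.map_fst_prod]
  simp [stdG]

lemma stdG_reindex {κ κ' : Type*} [Fintype κ] [Fintype κ'] (e : κ ≃ κ') :
    Measure.map (fun y : κ' → ℝ => fun t : κ => y (e t)) (stdG κ') = stdG κ := by
  have h := measurePreserving_piCongrLeft (α := fun _ : κ => ℝ)
    (μ := fun _ : κ => gaussianReal 0 1) e.symm
  have hco : (fun y : κ' → ℝ => fun t : κ => y (e t)) =
      ⇑(MeasurableEquiv.piCongrLeft (fun _ : κ => ℝ) e.symm) := by
    funext y
    ext t
    rw [MeasurableEquiv.coe_piCongrLeft]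
    conv_rhs => rw [show t = e.symm (e t) from (e.symm_apply_apply t).symm]
    exact (Equiv.piCongrLeft_apply_apply (fun _ : κ => ℝ) e.symm y (e t)).symm
  rw [hco]
  exact h.map_eq

/-- Pushforward of a standard Gaussian under a matrix with orthonormal rows is standard. -/
lemma stdG_orthonormal_rows {κ : Type*} [Fintype κ] [DecidableEq κ]
    (U : Matrix κ ι ℝ) (hU : U * Uᵀ = 1) :
    Measure.map (fun x : ι → ℝ => U *ᵥ x) (stdG ι) = stdG κ := by
  classical
  have hcard : Fintype.card κ ≤ Fintype.card ι := by
    have h1 : (1 : Matrix κ κ ℝ).rank = Fintype.card κ := Matrix.rank_one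
    have h2 : (U * Uᵀ).rank ≤ Fintype.card ι :=
      le_trans (Matrix.rank_mul_le_left U Uᵀ) (Matrix.rank_le_card_width U)
    rw [hU, h1] at h2
    exact h2
  set m := Fintype.card ι - Fintype.card κ with hm
  have hcards : Fintype.card (κ ⊕ Fin m) = Fintype.card ι := by
    simp [Fintype.card_sum, hm]
    omega
  obtain ⟨e⟩ : Nonempty (κ ⊕ Fin m ≃ ι) := ⟨Fintype.equivOfCardEq hcards⟩
  let E := EuclideanSpace ℝ ι
  let v : (κ ⊕ Fin m) → E := fun t => Sum.elim (fun p => (WithLp.toLp 2 (U p) : E)) (fun _ => 0) t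
  have hvon : Orthonormal ℝ ((Set.range (Sum.inl : κ → κ ⊕ Fin m)).restrict v) := by
    constructor
    · rintro ⟨t, p, rfl⟩
      have h : (inner ℝ (v (Sum.inl p)) (v (Sum.inl p)) : ℝ) = 1 := by
        simp only [v, Sum.elim_inl]
        rw [PiLp.inner_apply]
        simp only [RCLike.inner_apply, starRingEnd_apply]
        have := congrFun (congrFun hU p) p
        simpa [Matrix.mul_apply, Matrix.one_apply] using this
      show ‖v (Sum.inl p)‖ = 1
      have h2 : ‖v (Sum.inl p)‖ ^ 2 = 1 := by
        rw [← real_inner_self_eq_norm_sq, h]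
      nlinarith [norm_nonneg (v (Sum.inl p))]
    · rintro ⟨t, p, rfl⟩ ⟨t', q, rfl⟩ hne
      have hpq : p ≠ q := by
        intro h; exact hne (by simp [h])
      show inner ℝ (v (Sum.inl p)) (v (Sum.inl q)) = 0
      simp only [v, Sum.elim_inl]
      rw [PiLp.inner_apply]
      have := congrFun (congrFun hU p) q
      simpa [Matrix.mul_apply, Matrix.one_apply, hpq, mul_comm] using this
  have hfr : Module.finrank ℝ E = Fintype.card (κ ⊕ Fin m) := by
    simp [E, hcards]
  obtain ⟨bON, hbON⟩ := hvon.exists_orthonormalBasis_extension_of_card_eq hfr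
  let V : Matrix (κ ⊕ Fin m) ι ℝ := fun t j => bON t j
  have hV : V * Vᵀ = 1 := by
    ext t t'
    have hON := bON.orthonormal
    simp only [Matrix.mul_apply, Matrix.transpose_apply, Matrix.one_apply]
    by_cases h : t = t'
    · subst h
      have h1 : (inner ℝ (bON t) (bON t) : ℝ) = 1 := by
        rw [real_inner_self_eq_norm_sq, hON.1 t]; norm_num
      rw [PiLp.inner_apply] at h1
      simpa [mul_comm, sq] using h1
    · have h0 : (inner ℝ (bON t) (bON t') : ℝ) = 0 := hON.2 h
      rw [PiLp.inner_apply] at h0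
      simp only [RCLike.inner_apply, starRingEnd_apply] at h0
      simpa [h, mul_comm] using h0
  let V' : Matrix ι ι ℝ := fun i j => V (e.symm i) j
  have hV' : V' * V'ᵀ = 1 := by
    ext i i'
    have h := congrFun (congrFun hV (e.symm i)) (e.symm i')
    simp only [Matrix.mul_apply, Matrix.transpose_apply, Matrix.one_apply] at h ⊢
    simpa [V', (Equiv.apply_eq_iff_eq e.symm)] using h
  have hrow : ∀ x : ι → ℝ, (fun p : κ => (V' *ᵥ x) (e (Sum.inl p))) = U *ᵥ x := by
    intro x
    funext p
    simp only [Matrix.mulVec, dotProduct, V', Equiv.symm_apply_apply, V]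
    rw [hbON (Sum.inl p) ⟨p, rfl⟩]
    rfl
  have hmeasV' : Measurable fun x : ι → ℝ => V' *ᵥ x := measurable_mulVec V'
  have hsplit : (fun x : ι → ℝ => U *ᵥ x)
      = (fun w : (κ ⊕ Fin m) → ℝ => fun p => w (Sum.inl p))
        ∘ (fun y : ι → ℝ => fun t : κ ⊕ Fin m => y (e t))
        ∘ (fun x : ι → ℝ => V' *ᵥ x) := by
    funext x
    exact (hrow x).symm
  have hproj : Measurable fun w : (κ ⊕ Fin m) → ℝ => fun p => w (Sum.inl p) :=
    measurable_pi_lambda _ fun p => measurable_pi_apply _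
  have hre : Measurable fun y : ι → ℝ => fun t : κ ⊕ Fin m => y (e t) :=
    measurable_pi_lambda _ fun t => measurable_pi_apply _
  rw [hsplit, ← Function.comp_assoc,
    ← Measure.map_map (hproj.comp hre) hmeasV', stdG_rot V' hV',
    ← Measure.map_map hproj hre, stdG_reindex e, stdG_proj]

lemma stdG_factor {κ : Type*} [Fintype κ] [DecidableEq κ]
    (B : Matrix κ ι ℝ) (hPSD : (B * Bᵀ).PosSemidef) (hunit : IsUnit (B * Bᵀ)) :
    Measure.map (fun x : ι → ℝ => B *ᵥ x) (stdG ι)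
      = Measure.map (fun y : κ → ℝ => (psq hPSD) *ᵥ y) (stdG κ) := by
  set A := (psq hPSD) with hA
  have hA2 : A * A = B * Bᵀ := psq_mul_self hPSD
  have hAt : Aᵀ = A := by
    exact psq_transpose hPSD
  have hdetU : IsUnit A.det := by
    have h := (Matrix.isUnit_iff_isUnit_det _).mp hunit
    rw [← hA2, Matrix.det_mul] at h
    exact isUnit_of_mul_isUnit_left h
  have hAinv : A * A⁻¹ = 1 := Matrix.mul_nonsing_inv A hdetU
  have hAinv' : A⁻¹ * A = 1 := Matrix.nonsing_inv_mul A hdetU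
  set U := A⁻¹ * B with hUdef
  have hAU : A * U = B := by
    rw [hUdef, ← Matrix.mul_assoc, hAinv, Matrix.one_mul]
  have hUU : U * Uᵀ = 1 := by
    rw [hUdef, Matrix.transpose_mul, Matrix.transpose_nonsing_inv, hAt]
    calc A⁻¹ * B * (Bᵀ * A⁻¹) = A⁻¹ * (B * Bᵀ) * A⁻¹ := by
          rw [Matrix.mul_assoc, Matrix.mul_assoc, Matrix.mul_assoc]
      _ = A⁻¹ * (A * A) * A⁻¹ := by rw [hA2]
      _ = (A⁻¹ * A) * (A * A⁻¹) := by
          rw [Matrix.mul_assoc, Matrix.mul_assoc, Matrix.mul_assoc]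
      _ = 1 := by rw [hAinv', hAinv, Matrix.one_mul]
  have hcomp : (fun x : ι → ℝ => B *ᵥ x)
      = (fun y : κ → ℝ => A *ᵥ y) ∘ (fun x : ι → ℝ => U *ᵥ x) := by
    funext x
    simp [Function.comp, Matrix.mulVec_mulVec, hAU]
  rw [hcomp, ← Measure.map_map (measurable_mulVec A) (measurable_mulVec U),
    stdG_orthonormal_rows U hUU]

lemma real_conjT {a b : Type*} (B : Matrix a b ℝ) : Bᴴ = Bᵀ := by
  ext i j; simp [Matrix.conjTranspose_apply]

lemma measurable_const_add_mulVec {κ : Type*} (M : Matrix κ ι ℝ) (c : κ → ℝ) :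
    Measurable fun x : ι → ℝ => c + M *ᵥ x :=
  measurable_pi_lambda _ fun p =>
    measurable_const.add ((measurable_pi_apply p).comp (measurable_mulVec M))

lemma measurable_mulVec_add_const {κ : Type*} (M : Matrix κ ι ℝ) (c : κ → ℝ) :
    Measurable fun x : ι → ℝ => M *ᵥ x + c :=
  measurable_pi_lambda _ fun p =>
    ((measurable_pi_apply p).comp (measurable_mulVec M)).add measurable_const

lemma mvGaussian_eq_map (m : ι → ℝ) {S : Matrix ι ι ℝ} (hS : S.PosSemidef) :
    mvGaussian m S = Measure.map (fun x => m + (psq hS) *ᵥ x) (stdG ι) := by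
  simp only [mvGaussian]
  rw [dif_pos hS]
  rfl

lemma mvGaussian_affine {κ : Type*} [Fintype κ] [DecidableEq κ]
    (m : ι → ℝ) {S : Matrix ι ι ℝ} (hS : S.PosSemidef)
    (C : Matrix κ ι ℝ) (d : κ → ℝ) (hunit : IsUnit (C * S * Cᵀ))
    {T : Set (κ → ℝ)} (hT : MeasurableSet T) :
    mvGaussian m S ((fun x => C *ᵥ x + d) ⁻¹' T)
      = mvGaussian (C *ᵥ m + d) (C * S * Cᵀ) T := by
  have hsqt : (psq hS)ᵀ = (psq hS) := by
    exact psq_transpose hS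
  set B := C * (psq hS) with hB
  have hBB : B * Bᵀ = C * S * Cᵀ := by
    rw [hB, Matrix.transpose_mul, hsqt]
    calc C * (psq hS) * ((psq hS) * Cᵀ)
        = C * ((psq hS) * (psq hS)) * Cᵀ := by
          rw [Matrix.mul_assoc, Matrix.mul_assoc, Matrix.mul_assoc]
      _ = C * S * Cᵀ := by rw [psq_mul_self hS, Matrix.mul_assoc]
  rw [← hBB]
  have hPSD' : (B * Bᵀ).PosSemidef := by
    rw [hBB]
    have h := hS.mul_mul_conjTranspose_same C
    rwa [real_conjT] at h
  have hunit' : IsUnit (B * Bᵀ) := by rw [hBB]; exact hunit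
  rw [mvGaussian_eq_map m hS, mvGaussian_eq_map _ hPSD']
  have hTm : MeasurableSet ((fun w : κ → ℝ => (C *ᵥ m + d) + w) ⁻¹' T) := by
    have hmt : Measurable fun w : κ → ℝ => (C *ᵥ m + d) + w := measurable_const.add measurable_id
    exact hmt hT
  have hST : MeasurableSet ((fun x : ι → ℝ => C *ᵥ x + d) ⁻¹' T) :=
    measurable_mulVec_add_const C d hT
  rw [Measure.map_apply (measurable_const_add_mulVec (psq hS) m) hST]
  have hpre : (fun x : ι → ℝ => m + (psq hS) *ᵥ x) ⁻¹' ((fun x => C *ᵥ x + d) ⁻¹' T)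
      = (fun x : ι → ℝ => B *ᵥ x) ⁻¹' ((fun w => (C *ᵥ m + d) + w) ⁻¹' T) := by
    rw [← Set.preimage_comp, ← Set.preimage_comp]
    have hfeq : ((fun x : ι → ℝ => C *ᵥ x + d) ∘ fun x => m + (psq hS) *ᵥ x)
        = ((fun w => (C *ᵥ m + d) + w) ∘ fun x : ι → ℝ => B *ᵥ x) := by
      funext x
      show C *ᵥ (m + (psq hS) *ᵥ x) + d = (C *ᵥ m + d) + B *ᵥ x
      rw [Matrix.mulVec_add, hB, ← Matrix.mulVec_mulVec]
      abel
    rw [hfeq]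
  rw [hpre, ← Measure.map_apply (measurable_mulVec B) hTm, stdG_factor B hPSD' hunit',
    Measure.map_apply (measurable_mulVec (psq hPSD')) hTm,
    Measure.map_apply (measurable_const_add_mulVec (psq hPSD') _) hT]
  rfl

end AuxMeasure

section AuxNet
set_option linter.unusedSectionVars false

variable {n : ℕ → ℕ}

lemma hid_eq_affine (W : ∀ ℓ : ℕ, Matrix (Fin (n (ℓ + 1))) (Fin (n ℓ)) ℝ)
    (b : ∀ ℓ : ℕ, Fin (n (ℓ + 1)) → ℝ) (z : ∀ ℓ : ℕ, Fin (n (ℓ + 1)) → ℝ)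
    (x : Fin (n 0) → ℝ) (ℓ : ℕ)
    (h : ∀ ℓ' < ℓ, ∀ i, (if 0 < hid W b x ℓ' i then (1 : ℝ) else 0) = z ℓ' i) :
    hid W b x ℓ = Cmat W z ℓ *ᵥ x + dvec W b z ℓ := by
  induction ℓ with
  | zero => rfl
  | succ ℓ ih =>
    have hp := ih (fun ℓ' hl => h ℓ' (Nat.lt_succ_of_lt hl))
    have hrelu : (fun i => max 0 (hid W b x ℓ i)) = Matrix.diagonal (z ℓ) *ᵥ hid W b x ℓ := by
      funext i
      rw [Matrix.mulVec_diagonal]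
      have hzi := h ℓ (Nat.lt_succ_self ℓ) i
      by_cases hpos : 0 < hid W b x ℓ i
      · rw [if_pos hpos] at hzi
        rw [← hzi, one_mul, max_eq_right hpos.le]
      · rw [if_neg hpos] at hzi
        rw [← hzi, zero_mul, max_eq_left (not_lt.mp hpos)]
    show W (ℓ + 1) *ᵥ (fun i => max 0 (hid W b x ℓ i)) + b (ℓ + 1)
        = Cmat W z (ℓ + 1) *ᵥ x + dvec W b z (ℓ + 1)
    rw [hrelu, hp]
    show _ = (W (ℓ + 1) * Matrix.diagonal (z ℓ) * Cmat W z ℓ) *ᵥ x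
        + (W (ℓ + 1) *ᵥ (Matrix.diagonal (z ℓ) *ᵥ dvec W b z ℓ) + b (ℓ + 1))
    simp only [Matrix.mulVec_add, ← Matrix.mulVec_mulVec]
    abel

lemma inducesPattern_iff (M : ℕ) (W : ∀ ℓ : ℕ, Matrix (Fin (n (ℓ + 1))) (Fin (n ℓ)) ℝ)
    (b : ∀ ℓ : ℕ, Fin (n (ℓ + 1)) → ℝ) (z : ∀ ℓ : ℕ, Fin (n (ℓ + 1)) → ℝ)
    (x : Fin (n 0) → ℝ) :
    inducesPattern M W b x z ↔ ∀ ℓ < M, ∀ i,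
      (if 0 < (Cmat W z ℓ *ᵥ x + dvec W b z ℓ) i then (1 : ℝ) else 0) = z ℓ i := by
  constructor
  · intro h ℓ hl i
    rw [← hid_eq_affine W b z x ℓ (fun ℓ' hl' => h ℓ' (hl'.trans hl))]
    exact h ℓ hl i
  · intro h ℓ
    induction ℓ using Nat.strong_induction_on with
    | _ ℓ IH =>
      intro hl i
      rw [hid_eq_affine W b z x ℓ (fun ℓ' hl' i' => IH ℓ' hl' (hl'.trans hl) i')]
      exact h ℓ hl i

end AuxNet

/-- Proposition 1: for a Gaussian-mixture input, the probability of an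
activation pattern `ζ'` is the mixture of the Gaussian orthant probabilities
`N(C̄^{(L-1)} μ_k + d̄^{(L-1)}, C̄^{(L-1)} Σ_k C̄^{(L-1)ᵀ})(O(ζ'))`. -/
theorem statement8
    (n : ℕ → ℕ) (M : ℕ)  -- the network has `L = M + 1` layers
    (W : ∀ ℓ : ℕ, Matrix (Fin (n (ℓ + 1))) (Fin (n ℓ)) ℝ)
    (b : ∀ ℓ : ℕ, Fin (n (ℓ + 1)) → ℝ)
    (z : ∀ ℓ : ℕ, Fin (n (ℓ + 1)) → ℝ)
    (hz : ∀ ℓ < M, ∀ i, z ℓ i = 0 ∨ z ℓ i = 1)  -- `ζ' ∈ {0,1}^N`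
    (Kc : ℕ) (α : Fin Kc → ℝ) (hα : ∀ k, 0 < α k) (hαsum : ∑ k, α k = 1)
    (μmix : Fin Kc → Fin (n 0) → ℝ) (Smix : Fin Kc → Matrix (Fin (n 0)) (Fin (n 0)) ℝ)
    (hSpd : ∀ k, (Smix k).PosDef)
    {Ω : Type*} [MeasurableSpace Ω] (P : Measure Ω) [IsProbabilityMeasure P]
    (X : Ω → Fin (n 0) → ℝ) (hX : Measurable X)
    -- the input has Gaussian-mixture law `μ = ∑ k, α k • N(μ_k, Σ_k)`
    (hlaw : P.map X = ∑ k, ENNReal.ofReal (α k) • mvGaussian (μmix k) (Smix k))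
    -- the stacked matrix `C̄^{(L-1)}` and stacked vector `d̄^{(L-1)}`
    (Cbar : Matrix (PatIdx M n) (Fin (n 0)) ℝ)
    (hCbar : ∀ (p : PatIdx M n) (j : Fin (n 0)), Cbar p j = Cmat W z (p.1 : ℕ) p.2 j)
    (dbar : PatIdx M n → ℝ)
    (hdbar : ∀ p : PatIdx M n, dbar p = dvec W b z (p.1 : ℕ) p.2)
    -- `Σ̃_{k,ζ'} = C̄ Σ_k C̄ᵀ` is invertible for all `k`
    (hinv : ∀ k, IsUnit (Cbar * Smix k * Cbarᵀ)) :
    P {ω | inducesPattern M W b (X ω) z} =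
      ∑ k, ENNReal.ofReal (α k) *
        mvGaussian (Cbar *ᵥ μmix k + dbar) (Cbar * Smix k * Cbarᵀ)
          {v : PatIdx M n → ℝ |
            ∀ p : PatIdx M n, (if 0 < v p then (1 : ℝ) else 0) = z (p.1 : ℕ) p.2} := by
  classical
  set T : Set (PatIdx M n → ℝ) := {v : PatIdx M n → ℝ |
      ∀ p : PatIdx M n, (if 0 < v p then (1 : ℝ) else 0) = z (p.1 : ℕ) p.2} with hTdef
  have hmeasind : Measurable fun t : ℝ => (if 0 < t then (1 : ℝ) else 0) := by
    refine Measurable.ite ?_ measurable_const measurable_const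
    exact measurableSet_lt measurable_const measurable_id
  have hT : MeasurableSet T := by
    have hTeq : T = ⋂ p : PatIdx M n,
        (fun v : PatIdx M n → ℝ => v p) ⁻¹'
          ((fun t : ℝ => (if 0 < t then (1 : ℝ) else 0)) ⁻¹' {z (p.1 : ℕ) p.2}) := by
      ext v
      simp [hTdef, Set.mem_iInter]
    rw [hTeq]
    exact MeasurableSet.iInter fun p =>
      (measurable_pi_apply p) (hmeasind (measurableSet_singleton _))
  have hentry : ∀ (x : Fin (n 0) → ℝ) (p : PatIdx M n),
      (Cbar *ᵥ x + dbar) p = (Cmat W z (p.1 : ℕ) *ᵥ x + dvec W b z (p.1 : ℕ)) p.2 := by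
    intro x p
    have hrow : (Cbar *ᵥ x) p = (Cmat W z (p.1 : ℕ) *ᵥ x) p.2 := by
      simp only [Matrix.mulVec, dotProduct]
      exact Finset.sum_congr rfl fun j _ => by rw [hCbar p j]
    show (Cbar *ᵥ x) p + dbar p = (Cmat W z (p.1 : ℕ) *ᵥ x) p.2 + dvec W b z (p.1 : ℕ) p.2
    rw [hrow, hdbar p]
  have hsetEq : {ω | inducesPattern M W b (X ω) z}
      = X ⁻¹' ((fun x : Fin (n 0) → ℝ => Cbar *ᵥ x + dbar) ⁻¹' T) := by
    ext ω
    simp only [Set.mem_setOf_eq, Set.mem_preimage]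
    rw [inducesPattern_iff]
    constructor
    · intro h p
      rw [hentry (X ω) p]
      exact h (p.1 : ℕ) p.1.isLt p.2
    · intro h ℓ hl i
      have := h ⟨⟨ℓ, hl⟩, i⟩
      rwa [hentry (X ω) ⟨⟨ℓ, hl⟩, i⟩] at this
  have hS : MeasurableSet ((fun x : Fin (n 0) → ℝ => Cbar *ᵥ x + dbar) ⁻¹' T) :=
    measurable_mulVec_add_const Cbar dbar hT
  rw [hsetEq, ← Measure.map_apply hX hS, hlaw, Measure.finset_sum_apply]
  refine Finset.sum_congr rfl fun k _ => ?_
  rw [Measure.smul_apply, smul_eq_mul]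
  congr 1
  exact mvGaussian_affine (μmix k) (hSpd k).posSemidef Cbar dbar (hinv k) hT


end ReluPaper
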